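/- Let G be a permutation group on [n] and f : [n] → [n] an idempotent map of rank n−1 such that the transformation monoid M generated by G ∪ {f} contains a constant map. Then for all distinct 2-element subsets {a,b}, {c,d} of [n], there exists h ∈ M such that exactly one of h({a,b}), h({c,d}) is a singleton. -/

import Mathlib

open Finset

/-- The set of functions on `Fin n` arising from elements of the permutation group `G`. -/
def permSet {n : ℕ} (G : Subgroup (Equiv.Perm (Fin n))) : Set (Function.End (Fin n)) :=
  {h | ∃ g ∈ G, h = ⇑g}

/-- The transformation monoid generated by `G ∪ {f}`. -/
def genMon {n : ℕ} (G : Subgroup (Equiv.Perm (Fin n))) (f : Fin n → Fin n) :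
    Submonoid (Function.End (Fin n)) :=
  Submonoid.closure (permSet G ∪ {f})

/-- A permutation group is primitive if no subset `Δ` with `1 < |Δ| < n` is a block. -/
def IsPrimitive' {n : ℕ} (G : Subgroup (Equiv.Perm (Fin n))) : Prop :=
  ¬ ∃ Δ : Finset (Fin n), 1 < Δ.card ∧ Δ.card < n ∧
      ∀ g ∈ G, Δ.image ⇑g = Δ ∨ Disjoint (Δ.image ⇑g) Δ

section Aux

variable {n : ℕ} {f : Fin n → Fin n}

lemma pair_card_one {x y : Fin n} (h : f x = f y) :
    (({x, y} : Finset (Fin n)).image f).card = 1 := by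
  rw [image_insert, image_singleton, h, insert_eq_self.mpr (mem_singleton_self _),
    card_singleton]

lemma pair_card_two {x y : Fin n} (h : x ≠ y) :
    (({x, y} : Finset (Fin n)).card) = 2 := by
  rw [card_insert_of_notMem (notMem_singleton.mpr h), card_singleton]

/-- A rank `n-1` map collapses at most one 2-set. -/
lemma lemB (hrank : (univ.image f).card = n - 1)
    {P Q : Finset (Fin n)} (hP : P.card = 2) (hQ : Q.card = 2)
    (hfP : (P.image f).card = 1) (hfQ : (Q.image f).card = 1) : P = Q := by
  by_contra hne
  have hn : 2 ≤ n := by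
    have := card_le_card (subset_univ P)
    simpa [hP] using this
  have hPc : ∀ x ∈ P, ∀ y ∈ P, f x = f y := by
    intro x hx y hy
    have := Finset.card_le_one.mp (le_of_eq hfP)
    exact this _ (mem_image_of_mem f hx) _ (mem_image_of_mem f hy)
  have hQc : ∀ x ∈ Q, ∀ y ∈ Q, f x = f y := by
    intro x hx y hy
    have := Finset.card_le_one.mp (le_of_eq hfQ)
    exact this _ (mem_image_of_mem f hx) _ (mem_image_of_mem f hy)
  have hQP : ¬ Q ⊆ P := fun hsub => hne ((eq_of_subset_of_card_le hsub (by omega)).symm)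
  obtain ⟨t, htQ, htP⟩ := not_subset.mp hQP
  obtain ⟨t', ht'Q, ht't⟩ := exists_mem_ne (by omega : 1 < Q.card) t
  obtain ⟨p1, hp1⟩ := card_pos.mp (by omega : 0 < P.card)
  obtain ⟨p2, hp2, hp21⟩ := exists_mem_ne (by omega : 1 < P.card) p1
  obtain ⟨s, hsP, hst'⟩ : ∃ s, s ∈ P ∧ s ≠ t' := by
    by_cases h : p1 = t'
    · exact ⟨p2, hp2, by rw [← h]; exact hp21⟩
    · exact ⟨p1, hp1, h⟩
  obtain ⟨s', hs'P, hs's⟩ := exists_mem_ne (by omega : 1 < P.card) s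
  have hst : t ≠ s := fun h => htP (h.symm ▸ hsP)
  have hsub : univ.image f ⊆ ((univ.erase s).erase t).image f := by
    intro x hx
    obtain ⟨y, _, rfl⟩ := mem_image.mp hx
    by_cases hys : y = s
    · refine mem_image.mpr ⟨s', ?_, (hPc s' hs'P s hsP).trans (by rw [hys])⟩
      exact mem_erase.mpr ⟨fun h => htP (h ▸ hs'P), mem_erase.mpr ⟨hs's, mem_univ _⟩⟩
    · by_cases hyt : y = t
      · refine mem_image.mpr ⟨t', ?_, (hQc t' ht'Q t htQ).trans (by rw [hyt])⟩
        exact mem_erase.mpr ⟨ht't, mem_erase.mpr ⟨fun h => hst' h.symm, mem_univ _⟩⟩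
      · exact mem_image.mpr ⟨y, mem_erase.mpr ⟨hyt, mem_erase.mpr ⟨hys, mem_univ _⟩⟩, rfl⟩
  have hcard : ((univ.erase s).erase t).card = n - 2 := by
    rw [card_erase_of_mem (mem_erase.mpr ⟨hst, mem_univ _⟩), card_erase_of_mem (mem_univ _)]
    simp [card_univ]
    omega
  have := (card_le_card hsub).trans (card_image_le.trans (le_of_eq hcard))
  omega

lemma lemA_core (hrank : (univ.image f).card = n - 1)
    (p p' q q' : Fin n) (hpp : p ≠ p') (hqq : q ≠ q')
    (h1 : f p = f q) (h2 : f p' = f q') (hss : f p ≠ f p')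
    (hfix1 : f (f p) = f p) (hfix2 : f (f p') = f p')
    (hPQ : ({p, p'} : Finset (Fin n)) ≠ {q, q'})
    (hSP : ({f p, f p'} : Finset (Fin n)) ≠ {p, p'})
    (hSQ : ({f p, f p'} : Finset (Fin n)) ≠ {q, q'})
    (hpq : p = q) : False := by
  subst hpq
  have hpq' : p' ≠ q' := fun h => hPQ (by rw [h])
  have cardA : ({p', q'} : Finset (Fin n)).card = 2 := pair_card_two hpq'
  have colA : (({p', q'} : Finset (Fin n)).image f).card = 1 := pair_card_one h2
  have hp : p = f p := by
    by_contra hps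
    have eB := lemB hrank (pair_card_two hps) cardA (pair_card_one hfix1.symm) colA
    have hmem : p ∈ ({p', q'} : Finset (Fin n)) := eB ▸ mem_insert_self p _
    rcases mem_insert.mp hmem with h | h
    · exact hpp h
    · rw [mem_singleton] at h
      exact hss (by rw [h, ← h2])
  have hp' : p' = f p' := by
    by_contra hps'
    have eC := lemB hrank (pair_card_two hps') cardA (pair_card_one hfix2.symm) colA
    have hmem : f p' ∈ ({p', q'} : Finset (Fin n)) :=
      eC ▸ mem_insert.mpr (Or.inr (mem_singleton_self _))
    rcases mem_insert.mp hmem with h | h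
    · exact hps' h.symm
    · rw [mem_singleton] at h
      exact hSQ (by rw [← hp, ← h])
  exact hSP (by rw [← hp, ← hp'])

lemma lemA_core2 (hrank : (univ.image f).card = n - 1)
    (p p' q q' : Fin n) (hpp : p ≠ p') (hqq : q ≠ q')
    (h1 : f p = f q) (h2 : f p' = f q') (hss : f p ≠ f p')
    (hfix1 : f (f p) = f p) (hfix2 : f (f p') = f p')
    (hPQ : ({p, p'} : Finset (Fin n)) ≠ {q, q'})
    (hSP : ({f p, f p'} : Finset (Fin n)) ≠ {p, p'})
    (hSQ : ({f p, f p'} : Finset (Fin n)) ≠ {q, q'}) : False := by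
  by_cases hpq : p = q
  · exact lemA_core hrank p p' q q' hpp hqq h1 h2 hss hfix1 hfix2 hPQ hSP hSQ hpq
  by_cases hpq' : p' = q'
  · exact lemA_core hrank p' p q' q hpp.symm hqq.symm h2 h1 hss.symm hfix2 hfix1
      (fun h => hPQ ((pair_comm p p').trans (h.trans (pair_comm q' q))))
      (fun h => hSP ((pair_comm (f p) (f p')).trans (h.trans (pair_comm p' p))))
      (fun h => hSQ ((pair_comm (f p) (f p')).trans (h.trans (pair_comm q' q)))) hpq'
  · have e := lemB hrank (pair_card_two hpq) (pair_card_two hpq')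
      (pair_card_one h1) (pair_card_one h2)
    have hmem : p ∈ ({p', q'} : Finset (Fin n)) := e ▸ mem_insert_self p _
    rcases mem_insert.mp hmem with h | h
    · exact hpp h
    · rw [mem_singleton] at h
      exact hss (by rw [h, ← h2])

/-- If `f` merges two distinct 2-sets, their common image is one of them. -/
lemma lemA (hidem : f ∘ f = f) (hrank : (univ.image f).card = n - 1)
    {P Q : Finset (Fin n)} (hP : P.card = 2) (hQ : Q.card = 2) (hne : P ≠ Q)
    (heq : P.image f = Q.image f) : P.image f = P ∨ P.image f = Q := by
  by_contra hcon
  push_neg at hcon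
  obtain ⟨hSP, hSQ⟩ := hcon
  have hfix : ∀ x, f (f x) = f x := fun x => congrFun hidem x
  obtain ⟨p, p', hpp, rfl⟩ := card_eq_two.mp hP
  obtain ⟨q, q', hqq, rfl⟩ := card_eq_two.mp hQ
  have himP : ({p, p'} : Finset (Fin n)).image f = {f p, f p'} := by
    rw [image_insert, image_singleton]
  have himQ : ({q, q'} : Finset (Fin n)).image f = {f q, f q'} := by
    rw [image_insert, image_singleton]
  have hss : f p ≠ f p' := by
    intro h
    exact hne (lemB hrank hP hQ (pair_card_one h)
      (by rw [← heq]; exact pair_card_one h))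
  have heq' : ({f p, f p'} : Finset (Fin n)) = {f q, f q'} :=
    himP.symm.trans (heq.trans himQ)
  have hSP' : ({f p, f p'} : Finset (Fin n)) ≠ {p, p'} := himP ▸ hSP
  have hSQ' : ({f p, f p'} : Finset (Fin n)) ≠ {q, q'} := himP ▸ hSQ
  have hfp : f p ∈ ({f q, f q'} : Finset (Fin n)) := heq' ▸ mem_insert_self _ _
  have hfp' : f p' ∈ ({f q, f q'} : Finset (Fin n)) :=
    heq' ▸ mem_insert.mpr (Or.inr (mem_singleton_self _))
  rcases mem_insert.mp hfp with h1 | h1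
  · have h2 : f p' = f q' := by
      rcases mem_insert.mp hfp' with h | h
      · exact absurd (h1.trans h.symm) hss
      · exact mem_singleton.mp h
    exact lemA_core2 hrank p p' q q' hpp hqq h1 h2 hss (hfix p) (hfix p') hne hSP' hSQ'
  · rw [mem_singleton] at h1
    have h2 : f p' = f q := by
      rcases mem_insert.mp hfp' with h | h
      · exact h
      · rw [mem_singleton] at h
        exact absurd (h1.trans h.symm) hss
    exact lemA_core2 hrank p p' q' q hpp hqq.symm h1 h2 hss (hfix p) (hfix p')
      (fun h => hne (h.trans (pair_comm q' q))) hSP'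
      (fun h => hSQ' (h.trans (pair_comm q' q)))

lemma mul_eq_comp (a b : Function.End (Fin n)) : a * b = a ∘ b := rfl

/-- Main induction: if a word of length `k` collapses `P`, and `Q ≠ P`, then some element
of the monoid distinguishes `P` and `Q`. -/
lemma key (G : Subgroup (Equiv.Perm (Fin n)))
    (hidem : f ∘ f = f) (hrank : (univ.image f).card = n - 1) :
    ∀ k : ℕ, ∀ P Q : Finset (Fin n), ∀ l : List (Function.End (Fin n)),
      P.card = 2 → Q.card = 2 → P ≠ Q →
      (∀ x ∈ l, x ∈ permSet G ∪ {f}) → l.length = k →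
      (P.image l.prod).card = 1 →
      ∃ h ∈ genMon G f, Xor' ((P.image h).card = 1) ((Q.image h).card = 1) := by
  intro k
  induction k with
  | zero =>
    intro P Q l hP hQ _ _ hlen hcol
    rw [List.length_eq_zero_iff.mp hlen, List.prod_nil] at hcol
    rw [show ((1 : Function.End (Fin n)) : Fin n → Fin n) = id from rfl, image_id] at hcol
    omega
  | succ k ih =>
    intro P Q l hP hQ hne hmem hlen hcol
    rcases List.eq_nil_or_concat l with rfl | ⟨l', g, rfl⟩
    · simp at hlen
    · have hlen' : l'.length = k := by
        rw [List.length_concat] at hlen; omega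
      have hg : g ∈ permSet G ∪ {f} := hmem g (by simp [List.concat_eq_append])
      have hmem' : ∀ x ∈ l', x ∈ permSet G ∪ {f} := fun x hx =>
        hmem x (by simp [List.concat_eq_append, hx])
      have hprod : (l'.concat g).prod = l'.prod * g := by
        rw [List.concat_eq_append, List.prod_append, List.prod_cons, List.prod_nil, mul_one]
      have hcol' : ((P.image g).image l'.prod).card = 1 := by
        rw [image_image (f := (g : Fin n → Fin n)) (g := (l'.prod : Fin n → Fin n)),
          ← mul_eq_comp, ← hprod]
        exact hcol
      have hP'le : (P.image g).card ≤ 2 := hP ▸ card_image_le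
      have hP'pos : 0 < (P.image g).card :=
        card_pos.mpr ((card_pos.mp (by omega)).image g)
      have hQ'le : (Q.image g).card ≤ 2 := hQ ▸ card_image_le
      have hQ'pos : 0 < (Q.image g).card :=
        card_pos.mpr ((card_pos.mp (by omega)).image g)
      have hgM : g ∈ genMon G f := Submonoid.subset_closure hg
      by_cases hP1 : (P.image g).card = 1
      · by_cases hQ1 : (Q.image g).card = 1
        · exfalso
          rcases hg with ⟨σ, hσ, rfl⟩ | hgf
          · rw [card_image_of_injective P (Equiv.injective σ)] at hP1
            omega
          · replace hgf : g = f := hgf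
            subst hgf
            exact hne (lemB hrank hP hQ hP1 hQ1)
        · exact ⟨g, hgM, Or.inl ⟨hP1, hQ1⟩⟩
      · have hP2 : (P.image g).card = 2 := by omega
        by_cases hQ1 : (Q.image g).card = 1
        · exact ⟨g, hgM, Or.inr ⟨hQ1, hP1⟩⟩
        · have hQ2 : (Q.image g).card = 2 := by omega
          by_cases hPQ' : P.image g = Q.image g
          · rcases hg with ⟨σ, hσ, rfl⟩ | hgf
            · exact absurd (image_injective (Equiv.injective σ) hPQ') hne
            · replace hgf : g = f := hgf
              subst hgf
              rcases lemA hidem hrank hP hQ hne hPQ' with hA | hA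
              · apply ih P Q l' hP hQ hne hmem' hlen'
                rw [← hA]
                exact hcol'
              · obtain ⟨h, hh, hx⟩ := ih Q P l' hQ hP (Ne.symm hne) hmem' hlen'
                  (by rw [← hA]; exact hcol')
                exact ⟨h, hh, Or.symm hx⟩
          · obtain ⟨h, hh, hx⟩ := ih (P.image g) (Q.image g) l' hP2 hQ2 hPQ' hmem' hlen' hcol'
            refine ⟨h * g, mul_mem hh hgM, ?_⟩
            rw [show P.image (h * g) = (P.image g).image h from by
                rw [image_image (f := (g : Fin n → Fin n)) (g := (h : Fin n → Fin n)), ← mul_eq_comp],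
              show Q.image (h * g) = (Q.image g).image h from by
                rw [image_image (f := (g : Fin n → Fin n)) (g := (h : Fin n → Fin n)), ← mul_eq_comp]]
            exact hx

end Aux

theorem prim_grp_distinguishes_2_sets {n : ℕ} (G : Subgroup (Equiv.Perm (Fin n)))
    (f : Fin n → Fin n) (hidem : f ∘ f = f)
    (hrank : (univ.image f).card = n - 1)
    (hconst : ∃ h ∈ genMon G f, ∃ y, ∀ x, h x = y)
    (a b c d : Fin n) (hab : a ≠ b) (hcd : c ≠ d)
    (hne : ({a, b} : Finset (Fin n)) ≠ {c, d}) :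
    ∃ h ∈ genMon G f,
      Xor' ((({a, b} : Finset (Fin n)).image h).card = 1)
           ((({c, d} : Finset (Fin n)).image h).card = 1) := by
  obtain ⟨h, hh, y, hy⟩ := hconst
  obtain ⟨l, hl, hlp⟩ := Submonoid.exists_list_of_mem_closure hh
  have hcol : (({a, b} : Finset (Fin n)).image l.prod).card = 1 := by
    rw [hlp, image_insert (f := (h : Fin n → Fin n)), image_singleton (f := (h : Fin n → Fin n)), hy a, hy b,
      insert_eq_self.mpr (mem_singleton_self _), card_singleton]
  exact key G hidem hrank l.length {a, b} {c, d} l (pair_card_two hab) (pair_card_two hcd)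
    hne hl rfl hcol
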